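/- Let z > 0 be real, let w₁, w₂ ∈ ℂ, and set ν = (w₁ − w₂)/z. For each choice of sign ε ∈ {+1, −1}, the function I(q) = q^{(w₁+w₂)/(2z)}·I_{εν}(2√q/z) satisfies z²q²I''(q) + z²qI'(q) − (w₁+w₂)zqI'(q) + w₁w₂I(q) = qI(q) for all q > 0. -/

import Mathlib

/-- The modified Bessel function of the first kind `I_α(x)`, for `α ∈ ℂ` and real `x`,
defined via its power series; terms where `Γ` hits a pole vanish since
Mathlib's `Complex.Gamma` is `0` at the poles (so `1/Γ = 0` there). -/
noncomputable def besselI (α : ℂ) (x : ℝ) : ℂ :=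
  ∑' m : ℕ, (1 / ((Nat.factorial m : ℂ) * Complex.Gamma ((m : ℂ) + α + 1))) *
    (((x : ℂ) / 2) ^ (2 * (m : ℂ) + α))

open Complex Filter Set

/-- Ratio-test summability for the Bessel-type coefficients. -/
lemma qde_summable_aux {z : ℝ} (hz : 0 < z) (α : ℂ) (b : ℕ → ℂ)
    (hrec : ∀ m : ℕ, ((z : ℂ))^2 * ((m : ℂ)+1) * ((m : ℂ)+1+α) * b (m+1) = b m)
    (R : ℝ) (hR : 0 < R) (p : ℕ) :
    Summable (fun m : ℕ => ‖b m‖ * ((m : ℝ)+1)^p * R^m) := by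
  apply summable_of_ratio_norm_eventually_le (r := 1/2) (by norm_num)
  rw [eventually_atTop]
  refine ⟨⌈‖α‖⌉₊ + ⌈2^(p+1) * R / z^2⌉₊, fun m hm => ?_⟩
  have hm1 : (⌈‖α‖⌉₊ : ℝ) ≤ m := by exact_mod_cast le_trans (Nat.le_add_right _ _) hm
  have hm2 : (⌈2^(p+1) * R / z^2⌉₊ : ℝ) ≤ m := by
    exact_mod_cast le_trans (Nat.le_add_left _ _) hm
  have hα : ‖α‖ ≤ (m : ℝ) := le_trans (Nat.le_ceil _) hm1
  have hz2 : (0:ℝ) < z^2 := by positivity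
  have hR2 : 2^(p+1) * R ≤ z^2 * ((m:ℝ)+1) := by
    have := le_trans (Nat.le_ceil (2^(p+1) * R / z^2)) hm2
    rw [div_le_iff₀ hz2] at this
    calc 2^(p+1) * R ≤ (m:ℝ) * z^2 := this
      _ ≤ z^2 * ((m:ℝ)+1) := by nlinarith
  -- norm lower bound
  have h1 : (1:ℝ) ≤ ‖((m:ℂ)+1+α)‖ := by
    have h2 : ‖((m:ℂ)+1)‖ ≤ ‖((m:ℂ)+1+α)‖ + ‖α‖ := by
      calc ‖((m:ℂ)+1)‖ = ‖((m:ℂ)+1+α) - α‖ := by ring_nf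
        _ ≤ ‖((m:ℂ)+1+α)‖ + ‖α‖ := norm_sub_le _ _
    have h3 : ‖((m:ℂ)+1)‖ = (m:ℝ)+1 := by
      rw [show ((m:ℂ)+1) = ((m+1 : ℕ) : ℂ) by push_cast; ring, Complex.norm_natCast]
      push_cast; ring
    linarith
  -- from the recurrence
  have hb : ‖b m‖ = z^2 * ((m:ℝ)+1) * ‖((m:ℂ)+1+α)‖ * ‖b (m+1)‖ := by
    rw [← hrec m]
    have h3 : ‖((m:ℂ)+1)‖ = (m:ℝ)+1 := by
      rw [show ((m:ℂ)+1) = ((m+1 : ℕ) : ℂ) by push_cast; ring, Complex.norm_natCast]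
      push_cast; ring
    rw [norm_mul, norm_mul, norm_mul, h3]
    norm_num [Complex.norm_real, abs_of_pos hz]
  set B := ‖b (m+1)‖ with hB
  have hBnn : 0 ≤ B := norm_nonneg _
  have hpow : ((m:ℝ)+1+1)^p ≤ 2^p * ((m:ℝ)+1)^p := by
    rw [← mul_pow]
    apply pow_le_pow_left₀ (by positivity)
    nlinarith
  have hRnn : (0:ℝ) ≤ R^m := by positivity
  have key : B * ((m:ℝ)+1+1)^p * R^(m+1) ≤
      1/2 * (z^2 * ((m:ℝ)+1) * ‖((m:ℂ)+1+α)‖ * B * ((m:ℝ)+1)^p * R^m) := by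
    have e1 : B * ((m:ℝ)+1+1)^p * R^(m+1) ≤ B * (2^p * ((m:ℝ)+1)^p) * (R * R^m) := by
      calc B * ((m:ℝ)+1+1)^p * R^(m+1) = ((m:ℝ)+1+1)^p * (B * R^(m+1)) := by ring
        _ ≤ (2^p * ((m:ℝ)+1)^p) * (B * R^(m+1)) :=
            mul_le_mul_of_nonneg_right hpow (by positivity)
        _ = B * (2^p * ((m:ℝ)+1)^p) * (R * R^m) := by rw [pow_succ]; ring
    have e2 : B * (2^p * ((m:ℝ)+1)^p) * (R * R^m) ≤
        1/2 * (z^2 * ((m:ℝ)+1) * ‖((m:ℂ)+1+α)‖ * B * ((m:ℝ)+1)^p * R^m) := by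
      have h4 : 2^(p+1) * R ≤ z^2 * ((m:ℝ)+1) * ‖((m:ℂ)+1+α)‖ := by
        calc 2^(p+1) * R ≤ z^2 * ((m:ℝ)+1) := hR2
          _ = z^2 * ((m:ℝ)+1) * 1 := by ring
          _ ≤ z^2 * ((m:ℝ)+1) * ‖((m:ℂ)+1+α)‖ := by
              apply mul_le_mul_of_nonneg_left h1 (by positivity)
      have h5 : (2^(p+1)*R) * (B*((m:ℝ)+1)^p*R^m) ≤
          (z^2*((m:ℝ)+1)*‖((m:ℂ)+1+α)‖) * (B*((m:ℝ)+1)^p*R^m) :=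
        mul_le_mul_of_nonneg_right h4 (by positivity)
      calc B * (2^p * ((m:ℝ)+1)^p) * (R * R^m)
          = 1/2 * ((2^(p+1)*R) * (B*((m:ℝ)+1)^p*R^m)) := by rw [pow_succ]; ring
        _ ≤ 1/2 * ((z^2*((m:ℝ)+1)*‖((m:ℂ)+1+α)‖) * (B*((m:ℝ)+1)^p*R^m)) := by linarith
        _ = 1/2 * (z^2 * ((m:ℝ)+1) * ‖((m:ℂ)+1+α)‖ * B * ((m:ℝ)+1)^p * R^m) := by ring
    exact e1.trans e2
  push_cast
  calc ‖B * ((m:ℝ)+1+1)^p * R^(m+1)‖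
      = B * ((m:ℝ)+1+1)^p * R^(m+1) := Real.norm_of_nonneg (by positivity)
    _ ≤ 1/2 * (z^2 * ((m:ℝ)+1) * ‖((m:ℂ)+1+α)‖ * B * ((m:ℝ)+1)^p * R^m) := key
    _ = 1/2 * (‖b m‖ * ((m:ℝ)+1)^p * R^m) := by rw [hb]
    _ = 1/2 * ‖‖b m‖ * ((m:ℝ)+1)^p * R^m‖ := by
        rw [Real.norm_of_nonneg (by positivity)]

lemma qde_cpow_norm_le {a R y : ℝ} (ha : 0 < a) (hy1 : a ≤ y) (hy2 : y ≤ R) (m : ℕ) (s : ℂ) :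
    ‖((y:ℂ))^((m:ℂ)+s)‖ ≤ max (a ^ s.re) (R ^ s.re) * R^m := by
  have hy : 0 < y := lt_of_lt_of_le ha hy1
  rw [Complex.norm_cpow_eq_rpow_re_of_pos hy]
  have hre : ((m:ℂ)+s).re = (m:ℝ) + s.re := by simp
  rw [hre, Real.rpow_add hy, Real.rpow_natCast]
  have h1 : y^m ≤ R^m := pow_le_pow_left₀ hy.le hy2 m
  have h2 : y ^ s.re ≤ max (a ^ s.re) (R ^ s.re) := by
    rcases le_or_gt 0 s.re with h | h
    · exact le_max_of_le_right (Real.rpow_le_rpow hy.le hy2 h)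
    · exact le_max_of_le_left (Real.rpow_le_rpow_of_nonpos ha hy1 h.le)
  calc y^m * y^s.re ≤ R^m * max (a^s.re) (R^s.re) :=
        mul_le_mul h1 h2 (Real.rpow_nonneg hy.le _)
          (pow_nonneg (lt_of_lt_of_le ha (hy1.trans hy2)).le m)
    _ = max (a^s.re) (R^s.re) * R^m := by ring

lemma qde_summable_series {z : ℝ} (hz : 0 < z) (α : ℂ) (b : ℕ → ℂ)
    (hrec : ∀ m : ℕ, ((z : ℂ))^2 * ((m : ℂ)+1) * ((m : ℂ)+1+α) * b (m+1) = b m)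
    (c : ℕ → ℂ) (K : ℝ) (p : ℕ)
    (hc : ∀ m, ‖c m‖ ≤ K * ((m:ℝ)+1)^p * ‖b m‖) (μ : ℂ)
    {a R y : ℝ} (ha : 0 < a) (hy1 : a ≤ y) (hy2 : y ≤ R) :
    Summable (fun m : ℕ => c m * (y:ℂ)^((m:ℂ)+μ)) := by
  have hR : 0 < R := lt_of_lt_of_le ha (hy1.trans hy2)
  apply Summable.of_norm_bounded
    (g := fun m => (K * max (a^μ.re) (R^μ.re)) * (‖b m‖ * ((m:ℝ)+1)^p * R^m))
    ((qde_summable_aux hz α b hrec R hR p).mul_left _)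
  intro m
  calc ‖c m * (y:ℂ)^((m:ℂ)+μ)‖ = ‖c m‖ * ‖(y:ℂ)^((m:ℂ)+μ)‖ := norm_mul _ _
    _ ≤ (K * ((m:ℝ)+1)^p * ‖b m‖) * (max (a^μ.re) (R^μ.re) * R^m) :=
          mul_le_mul (hc m) (qde_cpow_norm_le ha hy1 hy2 m μ) (norm_nonneg _)
            (le_trans (norm_nonneg _) (hc m))
    _ = (K * max (a^μ.re) (R^μ.re)) * (‖b m‖ * ((m:ℝ)+1)^p * R^m) := by ring

lemma qde_hasDerivAt_series {z : ℝ} (hz : 0 < z) (α : ℂ) (b : ℕ → ℂ)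
    (hrec : ∀ m : ℕ, ((z : ℂ))^2 * ((m : ℂ)+1) * ((m : ℂ)+1+α) * b (m+1) = b m)
    (c : ℕ → ℂ) (K : ℝ) (p : ℕ)
    (hc : ∀ m, ‖c m‖ ≤ K * ((m:ℝ)+1)^p * ‖b m‖)
    (μ : ℂ) {q : ℝ} (hq : 0 < q) :
    HasDerivAt (fun y : ℝ => ∑' m : ℕ, c m * (y:ℂ)^((m:ℂ)+μ))
      (∑' m : ℕ, (c m * ((m:ℂ)+μ)) * (q:ℂ)^((m:ℂ)+(μ-1))) q := by
  have ha : (0:ℝ) < q/2 := by linarith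
  have hR : (0:ℝ) < q+1 := by linarith
  refine hasDerivAt_tsum_of_isPreconnected
    (u := fun m => (K * ((1+‖μ‖) * max ((q/2)^(μ-1).re) ((q+1)^(μ-1).re))) *
      (‖b m‖ * ((m:ℝ)+1)^(p+1) * (q+1)^m))
    (t := Set.Ioo (q/2) (q+1)) (y₀ := q)
    (g := fun (m : ℕ) (y : ℝ) => c m * (y:ℂ)^((m:ℂ)+μ))
    (g' := fun (m : ℕ) (y : ℝ) => c m * ((m:ℂ)+μ) * (y:ℂ)^((m:ℂ)+(μ-1)))
    ((qde_summable_aux hz α b hrec (q+1) hR (p+1)).mul_left _)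
    isOpen_Ioo isPreconnected_Ioo ?_ ?_ ?_ ?_ ?_
  · -- hg
    intro n y hy
    have hy0 : 0 < y := lt_trans ha hy.1
    have hslit : ((y:ℂ)) ∈ Complex.slitPlane := Or.inl (by simpa using hy0)
    have h := (((Complex.hasStrictDerivAt_cpow_const (c := (n:ℂ)+μ)
      hslit).hasDerivAt).comp_ofReal).const_mul (c n)
    have he : ((n:ℂ)+μ-1) = (n:ℂ)+(μ-1) := by ring
    simpa [he, mul_assoc] using h
  · -- hg'
    intro n y hy
    have hb1 : ‖((n:ℂ)+μ)‖ ≤ (1+‖μ‖) * ((n:ℝ)+1) := by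
      have : ‖((n:ℂ)+μ)‖ ≤ ‖((n:ℂ))‖ + ‖μ‖ := norm_add_le _ _
      rw [Complex.norm_natCast] at this
      nlinarith [norm_nonneg μ, Nat.cast_nonneg (α := ℝ) n]
    calc ‖c n * ((n:ℂ)+μ) * (y:ℂ)^((n:ℂ)+(μ-1))‖
        = ‖c n‖ * ‖((n:ℂ)+μ)‖ * ‖(y:ℂ)^((n:ℂ)+(μ-1))‖ := by rw [norm_mul, norm_mul]
      _ ≤ (K * ((n:ℝ)+1)^p * ‖b n‖) * ((1+‖μ‖) * ((n:ℝ)+1)) *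
          (max ((q/2)^(μ-1).re) ((q+1)^(μ-1).re) * (q+1)^n) := by
          apply mul_le_mul _ (qde_cpow_norm_le ha hy.1.le hy.2.le n (μ-1)) (norm_nonneg _)
          · exact mul_nonneg (le_trans (norm_nonneg _) (hc n)) (by positivity)
          · exact mul_le_mul (hc n) hb1 (norm_nonneg _) (le_trans (norm_nonneg _) (hc n))
      _ = (K * ((1+‖μ‖) * max ((q/2)^(μ-1).re) ((q+1)^(μ-1).re))) *
          (‖b n‖ * ((n:ℝ)+1)^(p+1) * (q+1)^n) := by rw [pow_succ]; ring
  · exact ⟨by linarith, by linarith⟩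
  · exact qde_summable_series hz α b hrec c K p hc μ ha (by linarith) (by linarith)
  · exact ⟨by linarith, by linarith⟩

lemma qde_brec {z : ℝ} (hz : 0 < z) (α : ℂ) (m : ℕ) :
    (z:ℂ)^2*((m:ℂ)+1)*((m:ℂ)+1+α) *
      ((1 / ((Nat.factorial (m+1) : ℂ) * Complex.Gamma (((m+1:ℕ) : ℂ)+α+1))) *
        (((z⁻¹:ℝ):ℂ))^(2*((m+1:ℕ):ℂ)+α)) =
    (1 / ((Nat.factorial m : ℂ) * Complex.Gamma ((m:ℂ)+α+1))) *
      (((z⁻¹:ℝ):ℂ))^(2*(m:ℂ)+α) := by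
  have hw : ((z⁻¹:ℝ):ℂ) ≠ 0 := by
    exact Complex.ofReal_ne_zero.mpr (inv_ne_zero hz.ne')
  have hc : ((m+1:ℕ):ℂ) = (m:ℂ)+1 := by push_cast; ring
  rw [hc]
  rw [show 2*((m:ℂ)+1)+α = (2*(m:ℂ)+α)+2 from by ring, Complex.cpow_add _ _ hw,
    show (2:ℂ) = ((2:ℕ):ℂ) from by norm_num, Complex.cpow_natCast]
  have hfac : (Nat.factorial (m+1) : ℂ) = ((m:ℂ)+1) * (Nat.factorial m : ℂ) := by
    rw [Nat.factorial_succ]; push_cast; ring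
  rw [hfac]
  by_cases h0 : (m:ℂ)+α+1 = 0
  · have h0' : (m:ℂ)+1+α = 0 := by linear_combination h0
    simp [h0, h0', Complex.Gamma_zero]
  · have hg : Complex.Gamma ((m:ℂ)+1+α+1) = ((m:ℂ)+α+1) * Complex.Gamma ((m:ℂ)+α+1) := by
      rw [show (m:ℂ)+1+α+1 = ((m:ℂ)+α+1)+1 from by ring, Complex.Gamma_add_one _ h0]
    rw [hg]
    by_cases hG : Complex.Gamma ((m:ℂ)+α+1) = 0
    · simp [hG]
    · have hz' : (z:ℂ) ≠ 0 := Complex.ofReal_ne_zero.mpr hz.ne'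
      have hm1 : ((m:ℂ)+1) ≠ 0 := Nat.cast_add_one_ne_zero m
      have hmf : (Nat.factorial m : ℂ) ≠ 0 :=
        Nat.cast_ne_zero.mpr (Nat.factorial_ne_zero m)
      have hwz : ((z⁻¹:ℝ):ℂ) = ((z:ℂ))⁻¹ := by push_cast; ring
      rw [hwz]
      field_simp
      ring

lemma qde_repr {z : ℝ} (hz : 0 < z) (α σ : ℂ) {q : ℝ} (hq : 0 < q) :
    (q:ℂ)^σ * besselI α (2 * Real.sqrt q / z) =
    ∑' m : ℕ, ((1 / ((Nat.factorial m : ℂ) * Complex.Gamma ((m:ℂ) + α + 1))) *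
      ((z⁻¹:ℝ):ℂ)^(2*(m:ℂ)+α)) * (q:ℂ)^((m:ℂ) + (σ + α/2)) := by
  rw [besselI, ← tsum_mul_left]
  refine tsum_congr fun m => ?_
  set s := Real.sqrt q with hs
  have hs0 : 0 < s := Real.sqrt_pos.mpr hq
  have hq' : ((q:ℝ):ℂ) ≠ 0 := Complex.ofReal_ne_zero.mpr hq.ne'
  have hs' : ((s:ℝ):ℂ) ≠ 0 := Complex.ofReal_ne_zero.mpr hs0.ne'
  have h1 : (((2 * s / z : ℝ):ℂ)) / 2 = ((s:ℝ):ℂ) * ((z⁻¹:ℝ):ℂ) := by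
    push_cast; ring
  rw [h1, Complex.mul_cpow_ofReal_nonneg hs0.le (inv_nonneg.mpr hz.le)]
  have h2 : ((s:ℝ):ℂ)^(2*(m:ℂ)+α) = (q:ℂ)^((m:ℂ)) * (q:ℂ)^(α/2) := by
    rw [Complex.cpow_add _ _ hs']
    congr 1
    · -- ↑s ^ (2*↑m) = ↑q ^ ↑m
      rw [show (2*(m:ℂ)) = ((2*m : ℕ) : ℂ) from by push_cast; ring,
        Complex.cpow_natCast, ← Complex.ofReal_pow, pow_mul, hs,
        Real.sq_sqrt hq.le, Complex.ofReal_pow, ← Complex.cpow_natCast]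
    · -- ↑s ^ α = ↑q ^ (α/2)
      have hsr : ((s:ℝ):ℂ) = ((q:ℝ):ℂ) ^ ((1/2 : ℂ)) := by
        rw [hs, Real.sqrt_eq_rpow, Complex.ofReal_cpow hq.le]
        norm_num
      rw [hsr, ← Complex.cpow_mul]
      · congr 1; ring
      · rw [← Complex.ofReal_log hq.le]
        simp [Real.pi_pos]
      · rw [← Complex.ofReal_log hq.le]
        simp [Real.pi_pos.le]
  rw [h2]
  rw [show (m:ℂ) + (σ + α/2) = σ + ((m:ℂ) + α/2) from by ring,
    Complex.cpow_add _ _ hq', Complex.cpow_add _ _ hq']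
  ring

lemma qde_key {z : ℝ} (hz : 0 < z) (w₁ w₂ ν ε : ℂ) (hν : ν = (w₁-w₂)/(z:ℂ))
    (hε : ε = 1 ∨ ε = -1) (m : ℂ) :
    (z:ℂ)^2*(m+((w₁+w₂)/(2*(z:ℂ)) + (ε*ν)/2))*(m+((w₁+w₂)/(2*(z:ℂ)) + (ε*ν)/2)-1)
      + (z:ℂ)^2*(m+((w₁+w₂)/(2*(z:ℂ)) + (ε*ν)/2))
      - (w₁+w₂)*(z:ℂ)*(m+((w₁+w₂)/(2*(z:ℂ)) + (ε*ν)/2)) + w₁*w₂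
      = (z:ℂ)^2*m*(m+ε*ν) := by
  have hz' : (z:ℂ) ≠ 0 := Complex.ofReal_ne_zero.mpr hz.ne'
  obtain ⟨a, rfl⟩ : ∃ a, w₁ = (z:ℂ)*a := ⟨w₁/(z:ℂ), by field_simp⟩
  obtain ⟨b, rfl⟩ : ∃ b, w₂ = (z:ℂ)*b := ⟨w₂/(z:ℂ), by field_simp⟩
  have hν' : ν = a - b := by rw [hν]; field_simp
  subst hν'
  have h2 : ((z:ℂ)*a+(z:ℂ)*b)/(2*(z:ℂ)) = (a+b)/2 := by field_simp
  rw [h2]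
  rcases hε with h | h <;> subst h <;> ring

/-- `q^((w₁+w₂)/(2z)) · I_{±ν}(2√q/z)` solves the equivariant quantum differential
equation of ℙ¹. -/
theorem bessel_solves_qde (z : ℝ) (hz : 0 < z) (w₁ w₂ ν : ℂ)
    (hν : ν = (w₁ - w₂) / (z : ℂ))
    (ε : ℂ) (hε : ε = 1 ∨ ε = -1)
    (Ifun : ℝ → ℂ)
    (hI : Ifun = fun q : ℝ =>
      (q : ℂ) ^ ((w₁ + w₂) / (2 * (z : ℂ))) * besselI (ε * ν) (2 * Real.sqrt q / z)) :
    ∀ q : ℝ, 0 < q →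
      (z : ℂ) ^ 2 * (q : ℂ) ^ 2 * deriv (deriv Ifun) q +
        (z : ℂ) ^ 2 * (q : ℂ) * deriv Ifun q -
        (w₁ + w₂) * (z : ℂ) * (q : ℂ) * deriv Ifun q +
        w₁ * w₂ * Ifun q = (q : ℂ) * Ifun q := by
  intro q hq
  have hz' : (z:ℂ) ≠ 0 := Complex.ofReal_ne_zero.mpr hz.ne'
  have hq' : ((q:ℝ):ℂ) ≠ 0 := Complex.ofReal_ne_zero.mpr hq.ne'
  set α : ℂ := ε * ν with hα
  set lam : ℂ := (w₁+w₂)/(2*(z:ℂ)) + α/2 with hlam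
  set b : ℕ → ℂ := fun m => (1 / ((Nat.factorial m : ℂ) * Complex.Gamma ((m:ℂ)+α+1))) *
    (((z⁻¹:ℝ):ℂ))^(2*(m:ℂ)+α) with hbdef
  have hrec : ∀ m : ℕ, (z:ℂ)^2*((m:ℂ)+1)*((m:ℂ)+1+α) * b (m+1) = b m := by
    intro m
    simp only [hbdef]
    exact_mod_cast qde_brec hz α m
  have hrepr : ∀ y : ℝ, 0 < y → Ifun y = ∑' m : ℕ, b m * (y:ℂ)^((m:ℂ)+lam) := by
    intro y hy
    rw [hI]
    simp only [hbdef, hlam]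
    exact qde_repr hz α ((w₁+w₂)/(2*(z:ℂ))) hy
  set c₁ : ℕ → ℂ := fun m => b m * ((m:ℂ)+lam) with hc₁def
  have hc0 : ∀ m : ℕ, ‖b m‖ ≤ 1 * ((m:ℝ)+1)^0 * ‖b m‖ := fun m => by simp
  have hnorm : ∀ (m : ℕ) (t : ℂ), ‖(m:ℂ)+t‖ ≤ (1+‖t‖) * ((m:ℝ)+1) := by
    intro m t
    calc ‖(m:ℂ)+t‖ ≤ ‖((m:ℂ))‖ + ‖t‖ := norm_add_le _ _
      _ = (m:ℝ) + ‖t‖ := by rw [Complex.norm_natCast]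
      _ ≤ (1+‖t‖) * ((m:ℝ)+1) := by nlinarith [norm_nonneg t, Nat.cast_nonneg (α := ℝ) m]
  have hc1 : ∀ m : ℕ, ‖c₁ m‖ ≤ (1+‖lam‖) * ((m:ℝ)+1)^1 * ‖b m‖ := by
    intro m
    simp only [hc₁def]
    rw [norm_mul]
    calc ‖b m‖ * ‖(m:ℂ)+lam‖ ≤ ‖b m‖ * ((1+‖lam‖)*((m:ℝ)+1)) :=
          mul_le_mul_of_nonneg_left (hnorm m lam) (norm_nonneg _)
      _ = (1+‖lam‖) * ((m:ℝ)+1)^1 * ‖b m‖ := by ring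
  have hc2 : ∀ m : ℕ, ‖c₁ m * ((m:ℂ)+(lam-1))‖ ≤
      ((1+‖lam‖)*(1+‖lam-1‖)) * ((m:ℝ)+1)^2 * ‖b m‖ := by
    intro m
    rw [norm_mul]
    calc ‖c₁ m‖ * ‖(m:ℂ)+(lam-1)‖
        ≤ ((1+‖lam‖) * ((m:ℝ)+1)^1 * ‖b m‖) * ((1+‖lam-1‖)*((m:ℝ)+1)) :=
          mul_le_mul (hc1 m) (hnorm m (lam-1)) (norm_nonneg _)
            (le_trans (norm_nonneg _) (hc1 m))
      _ = ((1+‖lam‖)*(1+‖lam-1‖)) * ((m:ℝ)+1)^2 * ‖b m‖ := by ring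
  have hD0 : ∀ y : ℝ, 0 < y →
      HasDerivAt (fun u : ℝ => ∑' m : ℕ, b m * (u:ℂ)^((m:ℂ)+lam))
        (∑' m : ℕ, (b m * ((m:ℂ)+lam)) * (y:ℂ)^((m:ℂ)+(lam-1))) y :=
    fun y hy => qde_hasDerivAt_series hz α b hrec b 1 0 hc0 lam hy
  have hD1 : HasDerivAt (fun u : ℝ => ∑' m : ℕ, c₁ m * (u:ℂ)^((m:ℂ)+(lam-1)))
      (∑' m : ℕ, (c₁ m * ((m:ℂ)+(lam-1))) * (q:ℂ)^((m:ℂ)+((lam-1)-1))) q :=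
    qde_hasDerivAt_series hz α b hrec c₁ (1+‖lam‖) 1 hc1 (lam-1) hq
  have hder1 : ∀ y : ℝ, 0 < y → deriv Ifun y = ∑' m : ℕ, c₁ m * (y:ℂ)^((m:ℂ)+(lam-1)) := by
    intro y hy
    have hev : Ifun =ᶠ[nhds y] fun u : ℝ => ∑' m : ℕ, b m * (u:ℂ)^((m:ℂ)+lam) :=
      Filter.eventuallyEq_of_mem (isOpen_Ioi.mem_nhds hy) (fun u hu => hrepr u hu)
    rw [hev.deriv_eq, (hD0 y hy).deriv]
  have hder2 : deriv (deriv Ifun) q =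
      ∑' m : ℕ, (c₁ m * ((m:ℂ)+(lam-1))) * (q:ℂ)^((m:ℂ)+((lam-1)-1)) := by
    have hev : deriv Ifun =ᶠ[nhds q] fun u : ℝ => ∑' m : ℕ, c₁ m * (u:ℂ)^((m:ℂ)+(lam-1)) :=
      Filter.eventuallyEq_of_mem (isOpen_Ioi.mem_nhds hq) (fun u hu => hder1 u hu)
    rw [hev.deriv_eq, hD1.deriv]
  rw [hder2, hder1 q hq, hrepr q hq]
  have S0 : Summable (fun m : ℕ => b m * (q:ℂ)^((m:ℂ)+lam)) :=
    qde_summable_series hz α b hrec b 1 0 hc0 lam hq le_rfl le_rfl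
  have S1 : Summable (fun m : ℕ => c₁ m * (q:ℂ)^((m:ℂ)+(lam-1))) :=
    qde_summable_series hz α b hrec c₁ (1+‖lam‖) 1 hc1 (lam-1) hq le_rfl le_rfl
  have S2 : Summable (fun m : ℕ => (c₁ m * ((m:ℂ)+(lam-1))) * (q:ℂ)^((m:ℂ)+((lam-1)-1))) :=
    qde_summable_series hz α b hrec (fun m => c₁ m * ((m:ℂ)+(lam-1)))
      ((1+‖lam‖)*(1+‖lam-1‖)) 2 hc2 ((lam-1)-1) hq le_rfl le_rfl
  rw [← tsum_mul_left, ← tsum_mul_left, ← tsum_mul_left, ← tsum_mul_left, ← tsum_mul_left]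
  rw [← Summable.tsum_add (S2.mul_left _) (S1.mul_left _),
    ← Summable.tsum_sub ((S2.mul_left _).add (S1.mul_left _)) (S1.mul_left _),
    ← Summable.tsum_add (((S2.mul_left _).add (S1.mul_left _)).sub (S1.mul_left _)) (S0.mul_left _)]
  have hA : ∀ t : ℂ, (q:ℂ)^(t+1) = (q:ℂ)^t * (q:ℂ) := fun t => by
    rw [Complex.cpow_add _ _ hq', Complex.cpow_one]
  have hkey : ∀ m : ℕ, (z:ℂ)^2*((m:ℂ)+lam)*((m:ℂ)+lam-1) + (z:ℂ)^2*((m:ℂ)+lam)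
      - (w₁+w₂)*(z:ℂ)*((m:ℂ)+lam) + w₁*w₂ = (z:ℂ)^2*(m:ℂ)*((m:ℂ)+α) := by
    intro m
    rw [hlam, hα]
    exact qde_key hz w₁ w₂ ν ε hν hε (m:ℂ)
  have hterm : ∀ m : ℕ,
      (z:ℂ)^2*(q:ℂ)^2*((c₁ m * ((m:ℂ)+(lam-1))) * (q:ℂ)^((m:ℂ)+((lam-1)-1)))
      + (z:ℂ)^2*(q:ℂ)*(c₁ m * (q:ℂ)^((m:ℂ)+(lam-1)))
      - (w₁+w₂)*(z:ℂ)*(q:ℂ)*(c₁ m * (q:ℂ)^((m:ℂ)+(lam-1)))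
      + w₁*w₂*(b m * (q:ℂ)^((m:ℂ)+lam))
      = ((z:ℂ)^2*(m:ℂ)*((m:ℂ)+α)*b m) * (q:ℂ)^((m:ℂ)+lam) := by
    intro m
    have e1 : (q:ℂ)^((m:ℂ)+(lam-1)) = (q:ℂ)^((m:ℂ)+((lam-1)-1)) * (q:ℂ) := by
      rw [show (m:ℂ)+(lam-1) = ((m:ℂ)+((lam-1)-1))+1 from by ring, hA]
    have e0 : (q:ℂ)^((m:ℂ)+lam) = (q:ℂ)^((m:ℂ)+((lam-1)-1)) * (q:ℂ) * (q:ℂ) := by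
      rw [show (m:ℂ)+lam = (((m:ℂ)+((lam-1)-1))+1)+1 from by ring, hA, hA]
    simp only [hc₁def]
    rw [e0, e1]
    linear_combination (b m * (q:ℂ)^((m:ℂ)+((lam-1)-1)) * (q:ℂ) * (q:ℂ)) * hkey m
  calc ∑' m : ℕ, ((z:ℂ)^2*(q:ℂ)^2*((c₁ m * ((m:ℂ)+(lam-1))) * (q:ℂ)^((m:ℂ)+((lam-1)-1)))
      + (z:ℂ)^2*(q:ℂ)*(c₁ m * (q:ℂ)^((m:ℂ)+(lam-1)))
      - (w₁+w₂)*(z:ℂ)*(q:ℂ)*(c₁ m * (q:ℂ)^((m:ℂ)+(lam-1)))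
      + w₁*w₂*(b m * (q:ℂ)^((m:ℂ)+lam)))
      = ∑' m : ℕ, ((z:ℂ)^2*(m:ℂ)*((m:ℂ)+α)*b m) * (q:ℂ)^((m:ℂ)+lam) := tsum_congr hterm
    _ = ∑' m : ℕ, (q:ℂ) * (b m * (q:ℂ)^((m:ℂ)+lam)) := by
        have hgsum : Summable (fun m : ℕ => ((z:ℂ)^2*(m:ℂ)*((m:ℂ)+α)*b m) * (q:ℂ)^((m:ℂ)+lam)) :=
          ((((S2.mul_left ((z:ℂ)^2*(q:ℂ)^2)).add (S1.mul_left ((z:ℂ)^2*(q:ℂ)))).sub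
            (S1.mul_left ((w₁+w₂)*(z:ℂ)*(q:ℂ)))).add (S0.mul_left (w₁*w₂))).congr hterm
        rw [Summable.tsum_eq_zero_add hgsum]
        simp only [Nat.cast_zero, mul_zero, zero_mul, zero_add]
        refine tsum_congr fun m => ?_
        have h1 := hrec m
        push_cast
        rw [show ((m:ℂ)+1+lam) = ((m:ℂ)+lam)+1 from by ring, hA]
        linear_combination ((q:ℂ)^((m:ℂ)+lam) * (q:ℂ)) * h1
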